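/- In the D-class D_{n-1} of PT_n consisting of partial transformations of rank n−1, there is no nontrivial 2×2 square of idempotents: there do not exist four distinct idempotents e, f, g, h of rank n−1 with e R f, g R h, e L g, f L h. -/

import Mathlib

attribute [local instance] Classical.propDecidable

/-- The monoid of partial transformations of `{1,…,n}`, written as partial maps
on `Fin n`, composed left-to-right: `x(αβ) = (xα)β`. -/
def PT (n : ℕ) : Type := Fin n → Option (Fin n)

instance (n : ℕ) : Mul (PT n) := ⟨fun α β x => (α x).bind β⟩
instance (n : ℕ) : One (PT n) := ⟨fun x => some x⟩

instance (n : ℕ) : Monoid (PT n) where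
  mul_assoc a b c := funext fun x => by
    show ((a x).bind b).bind c = (a x).bind fun y => (b y).bind c
    cases a x <;> rfl
  one_mul a := funext fun _ => rfl
  mul_one a := funext fun x => by
    show (a x).bind some = a x
    cases a x <;> rfl

namespace PT
variable {n : ℕ}

/-- The domain of a partial transformation. -/
def dom (α : PT n) : Set (Fin n) := {x | α x ≠ none}

/-- The image of a partial transformation. -/
def im (α : PT n) : Set (Fin n) := {y | ∃ x, α x = some y}

/-- The kernel: the partial equivalence `{(x,y) : x,y ∈ dom α, xα = yα}`. -/
def ker (α : PT n) : Fin n → Fin n → Prop :=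
  fun x y => x ∈ α.dom ∧ y ∈ α.dom ∧ α x = α y

/-- The principal left ideal `PT_n · α` (the monoid contains `1`, so it contains `α`). -/
def leftIdeal (α : PT n) : Set (PT n) := Set.range fun γ => γ * α

/-- The principal right ideal `α · PT_n`. -/
def rightIdeal (α : PT n) : Set (PT n) := Set.range fun γ => α * γ

end PT

namespace PTAux
open PT
variable {n : ℕ}

lemma mul_apply (α β : PT n) (x : Fin n) : (α * β) x = (α x).bind β := rfl

lemma bind_some_PT (β : PT n) (y : Fin n) : (some y).bind β = β y := rfl

lemma fix_of_mem_im {e : PT n} (he : e * e = e) {y : Fin n} (hy : y ∈ e.im) :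
    e y = some y := by
  obtain ⟨x, hx⟩ := hy
  have h := congrFun he x
  rw [mul_apply, hx] at h
  exact h

/-- Structure of a rank-`(n-1)` idempotent. -/
lemma idem_struct {e : PT n} (he : e * e = e) (him : e.im.ncard = n - 1) (hn : 1 ≤ n) :
    ∃ (w : Fin n) (t : Option (Fin n)), t ≠ some w ∧
      ∀ x, e x = if x = w then t else some x := by
  have hne : e.im ≠ Set.univ := by
    intro h
    rw [h, Set.ncard_univ, Nat.card_eq_fintype_card, Fintype.card_fin] at him
    omega
  obtain ⟨w, hw⟩ : ∃ w, w ∉ e.im := by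
    by_contra h
    push_neg at h
    exact hne (Set.eq_univ_of_forall h)
  have hmem : ∀ x : Fin n, x ≠ w → x ∈ e.im := by
    have hsub : e.im ⊆ {w}ᶜ := by
      intro x hx hxw
      simp only [Set.mem_singleton_iff] at hxw
      exact hw (hxw ▸ hx)
    have hcard : ({w}ᶜ : Set (Fin n)).ncard = n - 1 := by
      have := Set.ncard_add_ncard_compl ({w} : Set (Fin n)) (Set.toFinite _)
      rw [Set.ncard_singleton, Nat.card_eq_fintype_card,
        Fintype.card_fin] at this
      omega
    have : e.im = ({w}ᶜ : Set (Fin n)) :=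
      Set.eq_of_subset_of_ncard_le hsub (by rw [hcard, him]) (Set.toFinite _)
    intro x hx
    rw [this]
    simpa using hx
  refine ⟨w, e w, ?_, ?_⟩
  · intro h
    exact hw ⟨w, h⟩
  · intro x
    by_cases hx : x = w
    · simp [hx]
    · rw [if_neg hx]
      exact fix_of_mem_im he (hmem x hx)

/-- Two distinct `R`-related rank-`(n-1)` idempotents collapse each other's
missing point. -/
lemma R_struct {e f : PT n} {w w' : Fin n} {t t' : Option (Fin n)}
    (ht : t ≠ some w) (ht' : t' ≠ some w')
    (hes : ∀ x, e x = if x = w then t else some x)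
    (hfs : ∀ x, f x = if x = w' then t' else some x)
    (hef : e * f = f) (hne : e ≠ f) : t = some w' := by
  by_cases hww : w = w'
  · exfalso
    apply hne
    funext x
    rw [hes, hfs, hww]
    by_cases hx : x = w'
    · rw [if_pos hx, if_pos hx]
      have h := congrFun hef w
      rw [mul_apply, hes w, if_pos rfl, hfs w, hww, if_pos rfl] at h
      -- h : t.bind f = t'
      cases t with
      | none =>
        cases t' with
        | none => rfl
        | some y => cases h
      | some y =>
        have hyw : y ≠ w' := fun hy => ht (by rw [hww, hy])
        rw [bind_some_PT, hfs y, if_neg hyw] at h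
        exact h
    · rw [if_neg hx, if_neg hx]
  · have h := congrFun hef w
    rw [mul_apply, hes w, if_pos rfl, hfs w, if_neg hww] at h
    -- h : t.bind f = some w
    cases t with
    | none => cases h
    | some z =>
      rw [bind_some_PT, hfs z] at h
      by_cases hz : z = w'
      · rw [hz]
      · rw [if_neg hz, Option.some_inj] at h
        exact absurd (show (some z : Option (Fin n)) = some w by rw [h]) ht

/-- `L`-related rank-`(n-1)` idempotents have the same missing point. -/
lemma L_struct {e g : PT n} {w u : Fin n} {t s : Option (Fin n)}
    (hs : s ≠ some u)
    (hes : ∀ x, e x = if x = w then t else some x)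
    (hgs : ∀ x, g x = if x = u then s else some x)
    (heg : e * g = e) : u = w := by
  by_contra huw
  have h := congrFun heg u
  rw [mul_apply, hes u, if_neg huw] at h
  simp only [bind_some_PT] at h
  rw [hgs u, if_pos rfl] at h
  exact hs h

lemma mul_right_of_rightIdeal {e f : PT n} (he : e * e = e)
    (h : e.rightIdeal = f.rightIdeal) : e * f = f := by
  have hf : f ∈ f.rightIdeal := ⟨1, mul_one f⟩
  rw [← h] at hf
  obtain ⟨γ, hγ⟩ := hf
  simp only at hγ
  calc e * f = e * (e * γ) := by rw [hγ]
    _ = (e * e) * γ := (mul_assoc e e γ).symm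
    _ = e * γ := by rw [he]
    _ = f := hγ

lemma mul_left_of_leftIdeal {e g : PT n} (hg : g * g = g)
    (h : e.leftIdeal = g.leftIdeal) : e * g = e := by
  have he : e ∈ e.leftIdeal := ⟨1, one_mul e⟩
  rw [h] at he
  obtain ⟨γ, hγ⟩ := he
  simp only at hγ
  calc e * g = (γ * g) * g := by rw [hγ]
    _ = γ * (g * g) := mul_assoc γ g g
    _ = γ * g := by rw [hg]
    _ = e := hγ

end PTAux

open PTAux in
/-- In the `D`-class of rank-`(n-1)` elements of `PT_n` there is no nontrivial
`2×2` square of idempotents: no four distinct idempotents `e, f, g, h` of rank `n-1`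
with `e R f`, `g R h`, `e L g`, `f L h`. -/
theorem stmt_16 (n : ℕ) :
    ¬ ∃ e f g h : PT n,
        e * e = e ∧ f * f = f ∧ g * g = g ∧ h * h = h ∧
        e.im.ncard = n - 1 ∧ f.im.ncard = n - 1 ∧
        g.im.ncard = n - 1 ∧ h.im.ncard = n - 1 ∧
        e ≠ f ∧ e ≠ g ∧ e ≠ h ∧ f ≠ g ∧ f ≠ h ∧ g ≠ h ∧
        e.rightIdeal = f.rightIdeal ∧ g.rightIdeal = h.rightIdeal ∧
        e.leftIdeal = g.leftIdeal ∧ f.leftIdeal = h.leftIdeal := by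
  rintro ⟨e, f, g, h, he, hf, hg, hh, hime, himf, himg, himh,
    hef, heg, heh, hfg, hfh, hgh, hR1, hR2, hL1, hL2⟩
  rcases Nat.eq_zero_or_pos n with hn | hn
  · subst hn
    exact hef (funext fun x => x.elim0)
  obtain ⟨we, te, hte, hes⟩ := idem_struct he hime hn
  obtain ⟨wf, tf, htf, hfs⟩ := idem_struct hf himf hn
  obtain ⟨wg, tg, htg, hgs⟩ := idem_struct hg himg hn
  obtain ⟨wh, th, hth, hhs⟩ := idem_struct hh himh hn
  -- product identities from the ideal equalities
  have hEF : e * f = f := mul_right_of_rightIdeal he hR1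
  have hGH : g * h = h := mul_right_of_rightIdeal hg hR2
  have hEG : e * g = e := mul_left_of_leftIdeal hg hL1
  have hFH : f * h = f := mul_left_of_leftIdeal hh hL2
  -- structure from R-relations
  have hte' : te = some wf := R_struct hte htf hes hfs hEF hef
  have htg' : tg = some wh := R_struct htg hth hgs hhs hGH hgh
  -- same missing points from L-relations
  have hwg : wg = we := L_struct htg hes hgs hEG
  have hwh : wh = wf := L_struct hth hfs hhs hFH
  -- hence e = g, contradiction
  apply heg
  funext x
  rw [hes, hgs, hwg, hte', htg', hwh]
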